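/- Let V be a finite-dimensional normed real vector space, let μ, μ̂, μ̃ : V →ₗ[ℝ] V →ₗ[ℝ] V be bilinear maps (the Lie brackets of three Lie algebra structures 𝔤, 𝔤̂, 𝔤̃ on V), and let Û and Ũ be families of real-linear automorphisms of V indexed by ε ∈ (0,1] such that Û contracts μ to μ̂ and Ũ contracts μ̂ to μ̃. Assume the families are continuous in the contraction parameter, i.e. for each x ∈ V the maps ε ↦ Û ε x, ε ↦ (Û ε).symm x, ε ↦ Ũ ε x and ε ↦ (Ũ ε).symm x are continuous on (0,1]. Then there exists a function f : ℝ → ℝ, continuous and monotone on (0,1], mapping (0,1] into (0,1], with f(ε) → 0 as ε → 0⁺, such that the composite family ε ↦ Û (f ε) ∘ Ũ ε contracts μ to μ̃. -/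

import Mathlib

open Filter

/-- The family of automorphisms `U` contracts the bilinear map (Lie bracket) `μ` to `μ'`:
for all `x, y` the transformed bracket tends to `μ' x y` as `ε → 0⁺`. -/
def Contracts {V : Type*} [NormedAddCommGroup V] [NormedSpace ℝ V]
    (U : ℝ → (V ≃ₗ[ℝ] V)) (μ μ' : V →ₗ[ℝ] V →ₗ[ℝ] V) : Prop :=
  ∀ x y : V,
    Tendsto (fun ε => (U ε).symm (μ (U ε x) (U ε y))) (nhdsWithin 0 (Set.Ioi 0))
      (nhds (μ' x y))

section Aux

/- Pointwise convergence of continuous linear maps on a finite-dimensional space implies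
norm convergence. -/
private lemma clm_tendsto_of_pointwise {W E : Type*} [NormedAddCommGroup W] [NormedSpace ℝ W]
    [NormedAddCommGroup E] [NormedSpace ℝ E] [FiniteDimensional ℝ W] [FiniteDimensional ℝ E]
    {α : Type*} {l : Filter α} {A : α → (W →L[ℝ] E)} {L : W →L[ℝ] E}
    (h : ∀ v, Tendsto (fun t => A t v) l (nhds (L v))) : Tendsto A l (nhds L) := by
  classical
  haveI : FiniteDimensional ℝ (W →L[ℝ] E) :=
    LinearEquiv.finiteDimensional (LinearMap.toContinuousLinearMap : (W →ₗ[ℝ] E) ≃ₗ[ℝ] (W →L[ℝ] E))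
  set b := Module.finBasis ℝ W with hb
  set Ev : (W →L[ℝ] E) →ₗ[ℝ] (Fin (Module.finrank ℝ W) → E) :=
    LinearMap.pi fun i => (ContinuousLinearMap.apply ℝ E (b i)).toLinearMap with hEv
  have hinj : Function.Injective Ev := by
    intro T S hTS
    apply ContinuousLinearMap.coe_injective
    refine Module.Basis.ext b fun i => ?_
    exact congrFun hTS i
  have hemb := (LinearMap.isClosedEmbedding_of_injective
    (LinearMap.ker_eq_bot.mpr hinj)).toIsEmbedding
  rw [hemb.tendsto_nhds_iff, tendsto_pi_nhds]
  intro i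
  exact h (b i)

private lemma clm2_tendsto_of_pointwise {W : Type*} [NormedAddCommGroup W] [NormedSpace ℝ W]
    [FiniteDimensional ℝ W]
    {α : Type*} {l : Filter α} {A : α → (W →L[ℝ] W →L[ℝ] W)} {L : W →L[ℝ] W →L[ℝ] W}
    (h : ∀ v w, Tendsto (fun t => A t v w) l (nhds (L v w))) : Tendsto A l (nhds L) := by
  haveI : FiniteDimensional ℝ (W →L[ℝ] W) :=
    LinearEquiv.finiteDimensional (LinearMap.toContinuousLinearMap : (W →ₗ[ℝ] W) ≃ₗ[ℝ] (W →L[ℝ] W))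
  exact clm_tendsto_of_pointwise (fun v => clm_tendsto_of_pointwise (h v))

/- The building blocks of the reparameterization function: clamped ramps. -/
private noncomputable def segf (n : ℕ) (ε : ℝ) : ℝ := max 0 (min 1 (ε - 1/(n+2)))

private lemma segf_nonneg (n : ℕ) (ε : ℝ) : 0 ≤ segf n ε := le_max_left _ _
private lemma segf_le_one (n : ℕ) (ε : ℝ) : segf n ε ≤ 1 :=
  max_le (by norm_num) (min_le_left _ _)
private lemma segf_mono (n : ℕ) : Monotone (segf n) := by
  intro x y hxy
  exact max_le_max le_rfl (min_le_min le_rfl (by linarith))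
private lemma segf_eq_zero {n : ℕ} {ε : ℝ} (h : ε ≤ 1/(n+2)) : segf n ε = 0 := by
  have h2 : min 1 (ε - 1/(n+2)) ≤ 0 := le_trans (min_le_right _ _) (by linarith)
  unfold segf
  exact max_eq_left h2
private lemma segf_pos {n : ℕ} {ε : ℝ} (h : 1/(n+2) < ε) : 0 < segf n ε := by
  have h2 : (0:ℝ) < min 1 (ε - 1/(n+2)) := lt_min (by norm_num) (by linarith)
  unfold segf
  exact lt_max_of_lt_right h2

variable {δ : ℕ → ℝ} (hpos : ∀ n, 0 < δ n) (hanti : Antitone δ)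

/- The reparameterization: a uniformly convergent series of monotone ramps. -/
private noncomputable def interp (δ : ℕ → ℝ) (ε : ℝ) : ℝ := ∑' n, δ n * (1/2)^(n+1) * segf n ε

private lemma summable_half : Summable (fun n : ℕ => ((1:ℝ)/2)^(n+1)) := by
  have h := (summable_geometric_of_lt_one (by norm_num)
    (by norm_num : (1:ℝ)/2 < 1)).mul_left (1/2 : ℝ)
  exact h.congr (fun n => by rw [pow_succ]; ring)

include hpos in
private lemma interp_term_nonneg (ε : ℝ) (n : ℕ) : 0 ≤ δ n * (1/2)^(n+1) * segf n ε :=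
  mul_nonneg (mul_nonneg (hpos n).le (by positivity)) (segf_nonneg n ε)

include hpos hanti in
private lemma interp_term_le (ε : ℝ) (n : ℕ) : δ n * (1/2)^(n+1) * segf n ε ≤ δ 0 * (1/2)^(n+1) := by
  have hc : (0:ℝ) ≤ (1/2:ℝ)^(n+1) := by positivity
  calc δ n * (1/2)^(n+1) * segf n ε ≤ δ n * (1/2)^(n+1) * 1 := by
        have h1 := segf_le_one n ε
        have h2 := mul_nonneg (hpos n).le hc
        gcongr
    _ = δ n * (1/2)^(n+1) := mul_one _
    _ ≤ δ 0 * (1/2)^(n+1) := by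
        have := hanti (Nat.zero_le n)
        gcongr

include hpos hanti in
private lemma interp_summable (ε : ℝ) : Summable (fun n => δ n * (1/2)^(n+1) * segf n ε) :=
  Summable.of_nonneg_of_le (interp_term_nonneg hpos ε) (interp_term_le hpos hanti ε)
    (summable_half.mul_left (δ 0))

include hpos hanti in
private lemma interp_continuous : Continuous (interp δ) := by
  apply continuous_tsum (u := fun n => δ 0 * (1/2)^(n+1))
  · intro n
    apply Continuous.mul continuous_const
    unfold segf
    fun_prop
  · exact summable_half.mul_left (δ 0)
  · intro n ε
    rw [Real.norm_eq_abs, abs_of_nonneg (interp_term_nonneg hpos ε n)]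
    exact interp_term_le hpos hanti ε n

include hpos hanti in
private lemma interp_mono : Monotone (interp δ) := by
  intro x y hxy
  apply Summable.tsum_le_tsum _ (interp_summable hpos hanti x) (interp_summable hpos hanti y)
  intro n
  have h1 := (hpos n)
  have h2 := segf_mono n hxy
  gcongr

private lemma interp_zero : interp δ 0 = 0 := by
  unfold interp
  rw [show (fun n : ℕ => δ n * (1/2:ℝ)^(n+1) * segf n 0) = fun _ => 0 from
    funext fun n => by rw [segf_eq_zero (by positivity), mul_zero]]
  exact tsum_zero

include hpos hanti in
private lemma interp_pos {ε : ℝ} (h : 0 < ε) : 0 < interp δ ε := by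
  obtain ⟨n, hn⟩ := exists_nat_gt (1/ε)
  have hlt : 1/((n:ℝ)+2) < ε := by
    rw [div_lt_iff₀ (by positivity)]
    rw [div_lt_iff₀ h] at hn
    nlinarith
  have hterm : 0 < δ n * (1/2)^(n+1) * segf n ε :=
    mul_pos (mul_pos (hpos n) (by positivity)) (segf_pos hlt)
  refine lt_of_lt_of_le hterm ?_
  exact Summable.le_tsum (interp_summable hpos hanti ε) n
    (fun j _ => interp_term_nonneg hpos ε j)

include hpos hanti in
private lemma interp_key {n : ℕ} {ε : ℝ} (h : ε ≤ 1/(n+1)) :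
    interp δ ε ≤ δ n * (1/2)^n := by
  unfold interp
  have hsum := interp_summable hpos hanti (δ := δ) ε
  rw [← Summable.sum_add_tsum_nat_add n hsum]
  have hzero : ∀ m ∈ Finset.range n, δ m * (1/2:ℝ)^(m+1) * segf m ε = 0 := by
    intro m hm
    have hmn' : (m:ℝ) + 1 ≤ (n:ℝ) := by exact_mod_cast Finset.mem_range.mp hm
    have hle : ε ≤ 1/((m:ℝ)+2) := h.trans (by
      apply one_div_le_one_div_of_le <;> linarith)
    rw [segf_eq_zero hle, mul_zero]
  rw [Finset.sum_eq_zero hzero, zero_add]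
  have hsum2 : Summable (fun i => δ (i+n) * (1/2:ℝ)^(i+n+1) * segf (i+n) ε) :=
    (summable_nat_add_iff n).mpr hsum
  have hsum3 : Summable (fun i : ℕ => δ n * (1/2:ℝ)^(n+1) * (1/2)^i) :=
    (summable_geometric_of_lt_one (by norm_num) (by norm_num)).mul_left _
  calc ∑' i, δ (i+n) * (1/2:ℝ)^(i+n+1) * segf (i+n) ε
      ≤ ∑' i : ℕ, δ n * (1/2:ℝ)^(n+1) * (1/2)^i := by
        apply Summable.tsum_le_tsum _ hsum2 hsum3
        intro i
        have h1 : δ (i+n) ≤ δ n := hanti (Nat.le_add_left n i)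
        have h2 := segf_le_one (i+n) ε
        have h3 := segf_nonneg (i+n) ε
        have hp : (1/2:ℝ)^(i+n+1) = (1/2:ℝ)^(n+1) * (1/2)^i := by
          rw [show i+n+1 = (n+1)+i by omega, pow_add]
        calc δ (i+n) * (1/2:ℝ)^(i+n+1) * segf (i+n) ε
            ≤ δ n * (1/2:ℝ)^(i+n+1) * 1 := by
              have h4 := (hpos (i+n)).le
              have h5 : (0:ℝ) ≤ δ n * (1/2:ℝ)^(i+n+1) :=
                mul_nonneg (hpos n).le (by positivity)
              gcongr
          _ = δ n * (1/2:ℝ)^(n+1) * (1/2)^i := by rw [mul_one, hp, mul_assoc]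
    _ = δ n * (1/2:ℝ)^(n+1) * (1 - 1/2)⁻¹ := by
        rw [tsum_mul_left, tsum_geometric_of_lt_one (by norm_num) (by norm_num)]
    _ = δ n * (1/2:ℝ)^n := by rw [pow_succ]; ring

/- Bilinear continuous linear map associated to a bilinear map on a finite-dimensional space. -/
private noncomputable def toCLM2 {V : Type*} [NormedAddCommGroup V] [NormedSpace ℝ V]
    [FiniteDimensional ℝ V] (T : V →ₗ[ℝ] V →ₗ[ℝ] V) : V →L[ℝ] V →L[ℝ] V :=
  LinearMap.toContinuousLinearMap
    ((LinearMap.toContinuousLinearMap : (V →ₗ[ℝ] V) ≃ₗ[ℝ] (V →L[ℝ] V)).toLinearMap ∘ₗ T)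

private lemma toCLM2_apply {V : Type*} [NormedAddCommGroup V] [NormedSpace ℝ V]
    [FiniteDimensional ℝ V] (T : V →ₗ[ℝ] V →ₗ[ℝ] V) (x y : V) : toCLM2 T x y = T x y := rfl

end Aux

set_option maxHeartbeats 2000000

/-- If `Û` contracts `μ` to `μ̂`, `Ũ` contracts `μ̂` to `μ̃`, and both families are continuous in
the contraction parameter on `(0,1]`, then there is a continuous monotone reparameterization
`f : (0,1] → (0,1]` with `f(ε) → 0` as `ε → 0⁺` such that `ε ↦ Û (f ε) ∘ Ũ ε` contracts `μ`
to `μ̃`. -/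
theorem contraction_composition {V : Type*} [NormedAddCommGroup V] [NormedSpace ℝ V]
    [FiniteDimensional ℝ V]
    (μ μh μt : V →ₗ[ℝ] V →ₗ[ℝ] V)
    (Uh Ut : ℝ → (V ≃ₗ[ℝ] V))
    (h1 : Contracts Uh μ μh) (h2 : Contracts Ut μh μt)
    (hcont : ∀ x : V,
      ContinuousOn (fun ε => Uh ε x) (Set.Ioc 0 1) ∧
      ContinuousOn (fun ε => (Uh ε).symm x) (Set.Ioc 0 1) ∧
      ContinuousOn (fun ε => Ut ε x) (Set.Ioc 0 1) ∧
      ContinuousOn (fun ε => (Ut ε).symm x) (Set.Ioc 0 1)) :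
    ∃ f : ℝ → ℝ,
      ContinuousOn f (Set.Ioc 0 1) ∧ MonotoneOn f (Set.Ioc 0 1) ∧
      Set.MapsTo f (Set.Ioc 0 1) (Set.Ioc 0 1) ∧
      Tendsto f (nhdsWithin 0 (Set.Ioi 0)) (nhds 0) ∧
      Contracts (fun ε => (Ut ε).trans (Uh (f ε))) μ μt := by
  classical
  -- the transformed bracket as a family of bilinear continuous linear maps
  set Φ : ℝ → (V →L[ℝ] V →L[ℝ] V) := fun d =>
    toCLM2 (((μ.compl₁₂ (Uh d).toLinearMap (Uh d).toLinearMap)).compr₂ (Uh d).symm.toLinearMap)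
    with hΦdef
  have hΦapply : ∀ d x y, Φ d x y = (Uh d).symm (μ (Uh d x) (Uh d y)) := fun d x y => rfl
  set μhL : V →L[ℝ] V →L[ℝ] V := toCLM2 μh with hμhL
  -- norm convergence of Φ
  have hΦ : Tendsto Φ (nhdsWithin 0 (Set.Ioi 0)) (nhds μhL) := by
    apply clm2_tendsto_of_pointwise
    intro v w
    have := h1 v w
    rw [show μhL v w = μh v w from rfl]
    exact this.congr (fun d => (hΦapply d v w).symm)
  -- the Ut family as continuous linear maps, and its continuity in the parameter
  set UtL : ℝ → (V →L[ℝ] V) := fun e => LinearMap.toContinuousLinearMap (Ut e).toLinearMap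
    with hUtLdef
  set UtS : ℝ → (V →L[ℝ] V) := fun e => LinearMap.toContinuousLinearMap (Ut e).symm.toLinearMap
    with hUtSdef
  have hUtL : ContinuousOn UtL (Set.Ioc 0 1) := by
    intro x hx
    exact clm_tendsto_of_pointwise (fun v => (hcont v).2.2.1 x hx)
  have hUtS : ContinuousOn UtS (Set.Ioc 0 1) := by
    intro x hx
    exact clm_tendsto_of_pointwise (fun v => (hcont v).2.2.2 x hx)
  -- the amplification factor
  set C : ℝ → ℝ := fun e => ‖UtS e‖ * (‖UtL e‖ * ‖UtL e‖) with hCdef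
  have hCnonneg : ∀ e, 0 ≤ C e := fun e => by positivity
  have hC : ContinuousOn C (Set.Ioc 0 1) :=
    (hUtS.norm).mul ((hUtL.norm).mul (hUtL.norm))
  -- bounds for C on the compact pieces [1/(n+1), 1]
  have hBex : ∀ n : ℕ, ∃ B, ∀ e ∈ Set.Icc (1/((n:ℝ)+1)) 1, C e ≤ B := by
    intro n
    have hsub : Set.Icc (1/((n:ℝ)+1)) 1 ⊆ Set.Ioc 0 1 := fun e he =>
      ⟨lt_of_lt_of_le (by positivity) he.1, he.2⟩
    obtain ⟨B, hB⟩ := (isCompact_Icc).exists_bound_of_continuousOn (hC.mono hsub)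
    exact ⟨B, fun e he => (le_abs_self _).trans (by simpa using hB e he)⟩
  choose B hB using hBex
  -- the tolerances η and thresholds d
  set η : ℕ → ℝ := fun n => 1/(((n:ℝ)+1) * (max (B (n+1)) 0 + 1)) with hηdef
  have hηpos : ∀ n, 0 < η n := by
    intro n
    have : (0:ℝ) ≤ max (B (n+1)) 0 := le_max_right _ _
    positivity
  have hdex : ∀ n : ℕ, ∃ d > 0, ∀ ⦃t : ℝ⦄, t ∈ Set.Ioi (0:ℝ) → dist t 0 < d →
      dist (Φ t) μhL < η n :=
    fun n => Metric.tendsto_nhdsWithin_nhds.mp hΦ (η n) (hηpos n)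
  choose d hd0 hd using hdex
  -- the sequence δ
  set δseq : ℕ → ℝ := fun n =>
    Nat.rec (min 1 (d 0 / 2)) (fun k prev => min prev (d (k+1) / 2)) n with hδdef
  have hδ0 : δseq 0 = min 1 (d 0 / 2) := rfl
  have hδsucc : ∀ n, δseq (n+1) = min (δseq n) (d (n+1) / 2) := fun n => rfl
  have hδpos : ∀ n, 0 < δseq n := by
    intro n
    induction n with
    | zero => rw [hδ0]; exact lt_min one_pos (by linarith [hd0 0])
    | succ k ih => rw [hδsucc]; exact lt_min ih (by linarith [hd0 (k+1)])
  have hδanti : Antitone δseq := by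
    apply antitone_nat_of_succ_le
    intro n
    rw [hδsucc]
    exact min_le_left _ _
  have hδle1 : δseq 0 ≤ 1 := min_le_left _ _
  have hδled : ∀ n, δseq n < d n := by
    intro n
    cases n with
    | zero => exact lt_of_le_of_lt (min_le_right _ _) (by linarith [hd0 0])
    | succ k => exact lt_of_le_of_lt (min_le_right _ _) (by linarith [hd0 (k+1)])
  -- the reparameterization
  set f : ℝ → ℝ := interp δseq with hfdef
  have hfmono : Monotone f := interp_mono hδpos hδanti
  have hfcont : Continuous f := interp_continuous hδpos hδanti
  have hfpos : ∀ e : ℝ, 0 < e → 0 < f e := fun e he => interp_pos hδpos hδanti he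
  have hfkey : ∀ (n : ℕ) (e : ℝ), e ≤ 1/((n:ℝ)+1) → f e ≤ δseq n * (1/2)^n :=
    fun n e h => interp_key hδpos hδanti h
  refine ⟨f, hfcont.continuousOn, hfmono.monotoneOn _, ?_, ?_, ?_⟩
  · -- maps to
    intro e he
    refine ⟨hfpos e he.1, ?_⟩
    have := hfkey 0 e (by norm_num; exact he.2)
    simpa using this.trans (by simpa using hδle1)
  · -- tendsto 0
    have h0 : f 0 = 0 := interp_zero
    have := hfcont.tendsto 0
    rw [h0] at this
    exact this.mono_left nhdsWithin_le_nhds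
  · -- the contraction property
    -- the key quantitative estimate
    have key : ∀ (N : ℕ) (e : ℝ), 0 < e → e ≤ 1/((N:ℝ)+2) →
        C e * ‖Φ (f e) - μhL‖ ≤ 1/((N:ℝ)+1) := by
      intro N e he0 heN
      have he1 : e ≤ 1 := heN.trans (by
        rw [div_le_one (by positivity)]
        have : (0:ℝ) ≤ (N:ℝ) := Nat.cast_nonneg N
        linarith)
      -- find the window index n
      set k := ⌊1/e⌋₊ with hk
      have hNk : N + 2 ≤ k := by
        apply Nat.le_floor
        push_cast
        rw [le_div_iff₀ he0]
        rw [le_div_iff₀ (by positivity : (0:ℝ) < (N:ℝ)+2)] at heN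
        linarith
      set n := k - 1 with hn
      have hkn : n + 1 = k := by omega
      have hup : e ≤ 1/((n:ℝ)+1) := by
        rw [le_div_iff₀ (by positivity)]
        have h1 : ((k:ℝ)) ≤ 1/e := Nat.floor_le (by positivity)
        have h2 : ((n:ℝ)+1) = (k:ℝ) := by exact_mod_cast congrArg (Nat.cast (R := ℝ)) hkn
        rw [le_div_iff₀ he0] at h1
        nlinarith
      have hlow : 1/((n:ℝ)+2) ≤ e := by
        have h1 : 1/e < (k:ℝ) + 1 := Nat.lt_floor_add_one (1/e)
        have h2 : ((n:ℝ)+1) = (k:ℝ) := by exact_mod_cast congrArg (Nat.cast (R := ℝ)) hkn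
        rw [div_lt_iff₀ he0] at h1
        rw [div_le_iff₀ (by positivity)]
        nlinarith
      have hCe : C e ≤ B (n+1) := by
        apply hB (n+1) e
        constructor
        · push_cast
          convert hlow using 2
          · rfl
          · ring
        · exact he1
      have hNn : N + 1 ≤ n := by omega
      have hfe : f e < d n := by
        have hb1 : f e ≤ δseq n * (1/2)^n := hfkey n e hup
        have hb2 : δseq n * (1/2:ℝ)^n ≤ δseq n * 1 := by
          have := (hδpos n).le
          gcongr
          exact pow_le_one₀ (by norm_num) (by norm_num)
        have := hδled n
        linarith [hb1, hb2]
      have hdist : dist (Φ (f e)) μhL < η n := by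
        apply hd n (Set.mem_Ioi.mpr (hfpos e he0))
        rw [Real.dist_eq, sub_zero, abs_of_pos (hfpos e he0)]
        exact hfe
      have hnorm : ‖Φ (f e) - μhL‖ < η n := by
        rw [← dist_eq_norm (E := V →L[ℝ] V →L[ℝ] V)]; exact hdist
      set M := max (B (n+1)) 0 with hM
      have hM0 : 0 ≤ M := le_max_right _ _
      calc C e * ‖Φ (f e) - μhL‖
          ≤ M * η n := mul_le_mul (hCe.trans (le_max_left _ _)) hnorm.le (norm_nonneg (E := V →L[ℝ] V →L[ℝ] V) _) hM0
        _ ≤ 1/((n:ℝ)+1) := by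
            show M * (1/(((n:ℝ)+1) * (M + 1))) ≤ 1/((n:ℝ)+1)
            rw [mul_one_div, div_le_div_iff₀ (by positivity) (by positivity)]
            have hn0 : (0:ℝ) ≤ (n:ℝ) := Nat.cast_nonneg n
            nlinarith
        _ ≤ 1/((N:ℝ)+1) := by
            apply one_div_le_one_div_of_le (by positivity)
            have : ((N:ℝ)+1) ≤ (n:ℝ) := by exact_mod_cast hNn
            linarith
    -- the amplified error tends to zero
    have herrB : Tendsto (fun e => C e * ‖Φ (f e) - μhL‖) (nhdsWithin 0 (Set.Ioi 0)) (nhds 0) := by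
      rw [Metric.tendsto_nhdsWithin_nhds]
      intro ηg hηg
      obtain ⟨N, hN⟩ := exists_nat_one_div_lt hηg
      refine ⟨1/((N:ℝ)+2), by positivity, ?_⟩
      intro t ht hdist
      have ht0 : (0:ℝ) < t := ht
      have htN : t ≤ 1/((N:ℝ)+2) := by
        rw [Real.dist_eq, sub_zero, abs_of_pos ht0] at hdist
        exact hdist.le
      have hle := key N t ht0 htN
      rw [Real.dist_eq, sub_zero,
        abs_of_nonneg (mul_nonneg (hCnonneg t) (norm_nonneg (E := V →L[ℝ] V →L[ℝ] V) _))]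
      calc C t * ‖Φ (f t) - μhL‖ ≤ 1/((N:ℝ)+1) := hle
        _ < ηg := hN
    -- conclude
    intro x y
    have hψ := h2 x y
    have hbound : ∀ e : ℝ,
        ‖((Ut e).trans (Uh (f e))).symm (μ (((Ut e).trans (Uh (f e))) x)
            (((Ut e).trans (Uh (f e))) y)) - (Ut e).symm (μh (Ut e x) (Ut e y))‖
          ≤ C e * ‖Φ (f e) - μhL‖ * (‖x‖ * ‖y‖) := by
      intro e
      have hrw : ((Ut e).trans (Uh (f e))).symm (μ (((Ut e).trans (Uh (f e))) x)
            (((Ut e).trans (Uh (f e))) y)) - (Ut e).symm (μh (Ut e x) (Ut e y))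
          = UtS e ((Φ (f e) - μhL) (UtL e x) (UtL e y)) := by
        have e1 : ∀ z, UtS e z = (Ut e).symm z := fun z => rfl
        have e2 : ∀ z, UtL e z = Ut e z := fun z => rfl
        have e3 : ∀ v w, μhL v w = μh v w := fun v w => rfl
        simp only [ContinuousLinearMap.sub_apply, map_sub, e1, e2, e3, hΦapply]
        simp [LinearEquiv.trans_apply]
      rw [hrw]
      calc ‖UtS e ((Φ (f e) - μhL) (UtL e x) (UtL e y))‖
          ≤ ‖UtS e‖ * ‖(Φ (f e) - μhL) (UtL e x) (UtL e y)‖ :=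
            ContinuousLinearMap.le_opNorm _ _
        _ ≤ ‖UtS e‖ * (‖Φ (f e) - μhL‖ * ‖UtL e x‖ * ‖UtL e y‖) := by
            gcongr
            exact ContinuousLinearMap.le_opNorm₂ _ _ _
        _ ≤ ‖UtS e‖ * (‖Φ (f e) - μhL‖ * (‖UtL e‖ * ‖x‖) * (‖UtL e‖ * ‖y‖)) := by
            gcongr
            · exact ContinuousLinearMap.le_opNorm _ _
            · exact ContinuousLinearMap.le_opNorm _ _
        _ = C e * ‖Φ (f e) - μhL‖ * (‖x‖ * ‖y‖) := by rw [hCdef]; ring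
    have herr : Tendsto (fun e =>
        ((Ut e).trans (Uh (f e))).symm (μ (((Ut e).trans (Uh (f e))) x)
            (((Ut e).trans (Uh (f e))) y)) - (Ut e).symm (μh (Ut e x) (Ut e y)))
        (nhdsWithin 0 (Set.Ioi 0)) (nhds 0) := by
      apply squeeze_zero_norm hbound
      have := herrB.mul_const (‖x‖ * ‖y‖)
      simpa using this
    have hfinal := hψ.add herr
    rw [add_zero] at hfinal
    exact hfinal.congr (fun e => by abel)
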